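/- Let d, x ∈ ℍ be fixed quaternions and define e(w) = d − w·x for w ∈ ℍ. Then the HR*-derivative at every point w of the function w ↦ e(w)·e(w)* equals −(1/2)·e(w)·x*; that is, ∂(e·e*)/∂w* = −(1/2)·e·x*. -/

import Mathlib

open Quaternion

/-- The imaginary unit `i` of the real quaternions. -/
def qI : ℍ[ℝ] := ⟨0, 1, 0, 0⟩

/-- The imaginary unit `j` of the real quaternions. -/
def qJ : ℍ[ℝ] := ⟨0, 0, 1, 0⟩

/-- The imaginary unit `k` of the real quaternions. -/
def qK : ℍ[ℝ] := ⟨0, 0, 0, 1⟩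

/-- The HR*-derivative of `f : ℍ → ℍ` at `q`:
`(1/4) (D₁ f(q) + (Dᵢ f(q))·i + (Dⱼ f(q))·j + (Dₖ f(q))·k)`,
where `D_v f(q)` is the real Fréchet derivative of `f` at `q` in direction `v`. -/
noncomputable def HRStarDeriv (f : ℍ[ℝ] → ℍ[ℝ]) (q : ℍ[ℝ]) : ℍ[ℝ] :=
  (4 : ℍ[ℝ])⁻¹ * (fderiv ℝ f q 1 + fderiv ℝ f q qI * qI
    + fderiv ℝ f q qJ * qJ + fderiv ℝ f q qK * qK)

instance : StarModule ℝ ℍ[ℝ] := ⟨fun r q => by ext <;> simp⟩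

set_option maxHeartbeats 1000000 in
/-- The key quaternion algebra identity. -/
theorem quat_sum_identity (e x : ℍ[ℝ]) :
    e * star (-(1 * x)) + -(1 * x) * star e
    + (e * star (-(qI * x)) + -(qI * x) * star e) * qI
    + (e * star (-(qJ * x)) + -(qJ * x) * star e) * qJ
    + (e * star (-(qK * x)) + -(qK * x) * star e) * qK
    = -2 * (e * star x) := by
  conv_rhs => rw [neg_mul, two_mul]
  ext <;>
    simp only [Quaternion.re_mul, Quaternion.imI_mul, Quaternion.imJ_mul,
      Quaternion.imK_mul, Quaternion.re_star, Quaternion.imI_star, Quaternion.imJ_star,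
      Quaternion.imK_star, Quaternion.re_neg, Quaternion.imI_neg, Quaternion.imJ_neg,
      Quaternion.imK_neg, Quaternion.re_add, Quaternion.imI_add, Quaternion.imJ_add,
      Quaternion.imK_add, Quaternion.re_one, Quaternion.imI_one, Quaternion.imJ_one,
      Quaternion.imK_one] <;> simp only [qI, qJ, qK] <;> ring

/-- With e(w) = d − w·x, we have ∂(e·e*)/∂w* = −(1/2)·e·x*. -/
theorem hr_star_deriv_error_sq (d x w : ℍ[ℝ]) :
    HRStarDeriv (fun v => (d - v * x) * star (d - v * x)) w
      = -(2 : ℍ[ℝ])⁻¹ * ((d - w * x) * star x) := by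
  set e := d - w * x with he
  have h1 : HasFDerivAt (fun v : ℍ[ℝ] => d - v * x)
      (0 - (ContinuousLinearMap.id ℝ ℍ[ℝ]).smulRight x) w :=
    (hasFDerivAt_const d w).sub ((hasFDerivAt_id w).mul_const' x)
  have hs : HasFDerivAt (⇑(starL' ℝ : ℍ[ℝ] ≃L[ℝ] ℍ[ℝ]))
      ((starL' ℝ : ℍ[ℝ] ≃L[ℝ] ℍ[ℝ]) : ℍ[ℝ] →L[ℝ] ℍ[ℝ]) ((fun v : ℍ[ℝ] => d - v * x) w) :=
    (starL' ℝ : ℍ[ℝ] ≃L[ℝ] ℍ[ℝ]).hasFDerivAt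
  have h2 := hs.comp w h1
  have h3 := h1.mul' h2
  have hf := h3.fderiv
  have hv : ∀ v : ℍ[ℝ], fderiv ℝ (fun v => (d - v * x) * star (d - v * x)) w v
      = e * star (-(v * x)) + -(v * x) * star e := by
    intro v
    have hfun : (fun v : ℍ[ℝ] => (d - v * x) * star (d - v * x))
        = fun v : ℍ[ℝ] => (d - v * x) *
            ((⇑(starL' ℝ : ℍ[ℝ] ≃L[ℝ] ℍ[ℝ])) ∘ fun v : ℍ[ℝ] => d - v * x) v := by
      funext v; simp
    rw [hfun, show (fun v : ℍ[ℝ] => (d - v * x) *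
        ((⇑(starL' ℝ : ℍ[ℝ] ≃L[ℝ] ℍ[ℝ])) ∘ fun v : ℍ[ℝ] => d - v * x) v)
        = (fun v : ℍ[ℝ] => d - v * x) *
        ((⇑(starL' ℝ : ℍ[ℝ] ≃L[ℝ] ℍ[ℝ])) ∘ fun v : ℍ[ℝ] => d - v * x) from rfl, hf]
    simp [e]
  rw [HRStarDeriv, hv 1, hv qI, hv qJ, hv qK, quat_sum_identity]
  have htwo : (2 : ℍ[ℝ]) ≠ 0 := by
    intro h
    have h2 : ((2 : ℍ[ℝ])).re = (2 : ℝ) := rfl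
    rw [h, Quaternion.re_zero] at h2
    norm_num at h2
  have h42 : (4 : ℍ[ℝ])⁻¹ * (-2) = -(2 : ℍ[ℝ])⁻¹ := by
    rw [mul_neg, show (4 : ℍ[ℝ]) = 2 * 2 from by norm_num, mul_inv_rev, mul_assoc,
      inv_mul_cancel₀ htwo, mul_one]
  rw [← mul_assoc, h42]
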